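/- Let H be a homogeneous relation on X and for a nonempty subset A ⊆ X let s(A) be the number of splitters of A (elements x ∉ A such that ¬H(x|aa') for some a,a' ∈ A). Then s satisfies the submodular inequality on intersecting subsets: s(A) + s(B) ≥ s(A∪B) + s(A∩B) for all A, B with A∩B ≠ ∅. -/
import Mathlib


/-- `H` is a homogeneous relation: for each `x`, the binary relation
`H x · ·` is an equivalence relation on the elements distinct from `x`. -/
def IsHomRel {X : Type*} (H : X → X → X → Prop) : Prop :=
  (∀ x y, y ≠ x → H x y y) ∧
  (∀ x y z, y ≠ x → z ≠ x → H x y z → H x z y) ∧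
  (∀ x y z w, y ≠ x → z ≠ x → w ≠ x → H x y z → H x z w → H x y w)

/-- `M` is a homogeneous module of `H`. -/
def IsModule {X : Type*} (H : X → X → X → Prop) (M : Set X) : Prop :=
  ∀ m ∈ M, ∀ m' ∈ M, ∀ x ∉ M, H x m m'

/-- Two sets overlap. -/
def Overlap {X : Type*} (A B : Set X) : Prop :=
  (A ∩ B).Nonempty ∧ (A \ B).Nonempty ∧ (B \ A).Nonempty

/-- The set of splitters of `A`. -/
def splitters {X : Type*} (H : X → X → X → Prop) (A : Set X) : Set X :=
  {x | x ∉ A ∧ ∃ a ∈ A, ∃ a' ∈ A, ¬ H x a a'}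

theorem stmt_5 {X : Type*} [Fintype X] (H : X → X → X → Prop)
    (hH : IsHomRel H) (A B : Set X) (hAB : (A ∩ B).Nonempty) :
    (splitters H (A ∪ B)).ncard + (splitters H (A ∩ B)).ncard ≤
      (splitters H A).ncard + (splitters H B).ncard := by
  classical
  obtain ⟨c, hcA, hcB⟩ := hAB
  set P := splitters H (A ∪ B)
  set Q := splitters H (A ∩ B)
  set S := splitters H A
  set T := splitters H B
  have hUnion : P ∪ Q ⊆ S ∪ T := by
    rintro x (⟨hx, a, ha, a', ha', hno⟩ | ⟨hx, a, ha, a', ha', hno⟩)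
    · -- x splits A ∪ B
      have hxA : x ∉ A := fun h => hx (Or.inl h)
      have hxB : x ∉ B := fun h => hx (Or.inr h)
      have hax : a ≠ x := by rintro rfl; exact hx ha
      have ha'x : a' ≠ x := by rintro rfl; exact hx ha'
      have hcx : c ≠ x := by rintro rfl; exact hxA hcA
      rcases ha with haA | haB <;> rcases ha' with ha'A | ha'B
      · exact Or.inl ⟨hxA, a, haA, a', ha'A, hno⟩
      · -- a ∈ A, a' ∈ B : use c ∈ A ∩ B
        by_cases h1 : H x a c
        · refine Or.inr ⟨hxB, c, hcB, a', ha'B, fun h2 => hno ?_⟩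
          exact hH.2.2 x a c a' hax hcx ha'x h1 h2
        · exact Or.inl ⟨hxA, a, haA, c, hcA, h1⟩
      · -- a ∈ B, a' ∈ A
        by_cases h1 : H x a c
        · refine Or.inl ⟨hxA, c, hcA, a', ha'A, fun h2 => hno ?_⟩
          exact hH.2.2 x a c a' hax hcx ha'x h1 h2
        · exact Or.inr ⟨hxB, a, haB, c, hcB, h1⟩
      · exact Or.inr ⟨hxB, a, haB, a', ha'B, hno⟩
    · -- x splits A ∩ B
      rcases (not_and_or.mp (fun h : x ∈ A ∧ x ∈ B => hx ⟨h.1, h.2⟩)) with hxA | hxB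
      · exact Or.inl ⟨hxA, a, ha.1, a', ha'.1, hno⟩
      · exact Or.inr ⟨hxB, a, ha.2, a', ha'.2, hno⟩
  have hInter : P ∩ Q ⊆ S ∩ T := by
    rintro x ⟨⟨hx, _⟩, ⟨_, a, ha, a', ha', hno⟩⟩
    have hxA : x ∉ A := fun h => hx (Or.inl h)
    have hxB : x ∉ B := fun h => hx (Or.inr h)
    exact ⟨⟨hxA, a, ha.1, a', ha'.1, hno⟩, ⟨hxB, a, ha.2, a', ha'.2, hno⟩⟩
  have hfin : ∀ s : Set X, s.Finite := fun s => s.toFinite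
  calc P.ncard + Q.ncard = (P ∪ Q).ncard + (P ∩ Q).ncard :=
        (Set.ncard_union_add_ncard_inter P Q (hfin P) (hfin Q)).symm
    _ ≤ (S ∪ T).ncard + (S ∩ T).ncard :=
        Nat.add_le_add (Set.ncard_le_ncard hUnion (hfin _))
          (Set.ncard_le_ncard hInter (hfin _))
    _ = S.ncard + T.ncard := Set.ncard_union_add_ncard_inter S T (hfin S) (hfin T)
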